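/- The function α ↦ h(α)/(α(1−α)), where h is the binary entropy function, attains its minimum on (0,1) at α = 1/2, with minimum value 4 log 2. -/

import Mathlib

open Real Set

/-- `log (1+t) ≥ t - t²/2` for `t ≥ 0`. -/
lemma log_one_add_ge (t : ℝ) (ht : 0 ≤ t) : t - t ^ 2 / 2 ≤ Real.log (1 + t) := by
  set u : ℝ → ℝ := fun s => Real.log (1 + s) - s + s ^ 2 / 2 with hu
  have hderiv : ∀ s ∈ interior (Ici (0:ℝ)), HasDerivAt u ((1 + s)⁻¹ - 1 + s) s := by
    intro s hs
    rw [interior_Ici] at hs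
    have h1 : (0:ℝ) < 1 + s := by simp at hs; linarith
    have : HasDerivAt (fun s : ℝ => Real.log (1 + s)) ((1+s)⁻¹) s := by
      have := (Real.hasDerivAt_log h1.ne').comp s ((hasDerivAt_id s).const_add 1)
      exact this.congr_deriv (by simp)
    have h2 : HasDerivAt (fun s : ℝ => s ^ 2 / 2) s s := by
      have := ((hasDerivAt_pow 2 s).div_const 2)
      simpa using this
    exact (this.sub (hasDerivAt_id s)).add h2
  have hmono : MonotoneOn u (Ici 0) := by
    apply monotoneOn_of_deriv_nonneg (convex_Ici 0)
    · apply ContinuousOn.add (ContinuousOn.sub ?_ (continuous_id.continuousOn))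
        (by fun_prop)
      intro s hs
      have h1 : (0:ℝ) < 1 + s := by simp at hs; linarith
      exact ((Real.continuousAt_log h1.ne').comp (by fun_prop)).continuousWithinAt
    · intro s hs
      exact ((hderiv s hs).differentiableAt).differentiableWithinAt
    · intro s hs
      rw [(hderiv s hs).deriv]
      rw [interior_Ici] at hs
      have h1 : (0:ℝ) < 1 + s := by simp at hs; linarith
      have : (1+s)⁻¹ - 1 + s = s^2 / (1+s) := by field_simp; ring
      rw [this]
      positivity
  have h0 : u 0 ≤ u t := hmono (Set.mem_Ici.mpr (le_refl 0)) ht ht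
  simp [hu] at h0
  linarith

noncomputable def phi (x : ℝ) : ℝ := Real.log x / (x - 1)

lemma hasDerivAt_phi {x : ℝ} (hx : x ∈ Ioo (0:ℝ) 1) :
    HasDerivAt phi ((1 - 1/x - Real.log x) / (x-1)^2) x := by
  have hx0 : (0:ℝ) < x := hx.1
  have hx1 : x - 1 ≠ 0 := by have := hx.2; intro h; linarith [sub_eq_zero.1 h]
  have h := (Real.hasDerivAt_log hx0.ne').div ((hasDerivAt_id x).sub_const 1) hx1
  exact h.congr_deriv (by simp only [id_eq, mul_one, one_div, mul_sub, inv_mul_cancel₀ hx0.ne'])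

lemma hasDerivAt_deriv_phi {x : ℝ} (hx : x ∈ Ioo (0:ℝ) 1) :
    HasDerivAt (fun y => (1 - 1/y - Real.log y) / (y-1)^2)
      (((1/x^2 - 1/x) * (x-1)^2 - (1 - 1/x - Real.log x) * (2*(x-1))) / ((x-1)^2)^2) x := by
  have hx0 : (0:ℝ) < x := hx.1
  have hx1 : x - 1 ≠ 0 := by have := hx.2; intro h; linarith [sub_eq_zero.1 h]
  have hN : HasDerivAt (fun y : ℝ => 1 - 1/y - Real.log y) (1/x^2 - 1/x) x := by
    have h1 : HasDerivAt (fun y : ℝ => 1 - 1/y) (1/x^2) x := by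
      simpa [one_div, sub_eq_add_neg, sq] using ((hasDerivAt_inv hx0.ne').const_sub 1)
    exact (h1.sub (Real.hasDerivAt_log hx0.ne')).congr_deriv (by ring)
  have hD : HasDerivAt (fun y : ℝ => (y-1)^2) (2*(x-1)) x := by
    have := ((hasDerivAt_id x).sub_const 1).pow 2
    exact this.congr_deriv (by simp)
  exact hN.div hD (pow_ne_zero 2 hx1)

lemma deriv2_phi_nonneg {x : ℝ} (hx : x ∈ Ioo (0:ℝ) 1) :
    0 ≤ ((1/x^2 - 1/x) * (x-1)^2 - (1 - 1/x - Real.log x) * (2*(x-1))) / ((x-1)^2)^2 := by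
  have hx0 : (0:ℝ) < x := hx.1
  have hx1 : x < 1 := hx.2
  have hxne : x ≠ 0 := hx0.ne'
  have hA := log_one_add_ge ((1-x)/x) (by apply div_nonneg <;> linarith)
  have hlog : Real.log (1 + (1-x)/x) = - Real.log x := by
    rw [show 1 + (1-x)/x = x⁻¹ by field_simp; ring, Real.log_inv]
  rw [hlog] at hA
  apply div_nonneg _ (by positivity)
  have key : (1/x^2 - 1/x) * (x-1) - 2*(1 - 1/x - Real.log x) ≤ 0 := by
    have hx2 : (0:ℝ) < x^2 := by positivity
    have h2 : x^2 * ((1/x^2 - 1/x) * (x-1) - 2*(1 - 1/x - Real.log x))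
        = -(1-x)^2 - 2*x^2 + 2*x + 2*(x^2*Real.log x) := by field_simp; ring
    have h3 : x^2 * ((1-x)/x - ((1-x)/x)^2/2) = x*(1-x) - (1-x)^2/2 := by field_simp
    have h4 : x*(1-x) - (1-x)^2/2 ≤ x^2 * (-Real.log x) := by
      rw [← h3]; exact mul_le_mul_of_nonneg_left hA (by positivity)
    have h5 : x^2 * ((1/x^2 - 1/x) * (x-1) - 2*(1 - 1/x - Real.log x)) ≤ x^2 * 0 := by
      rw [h2, mul_zero]; nlinarith [h4]
    exact le_of_mul_le_mul_left h5 hx2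
  have : (1/x^2 - 1/x) * (x-1)^2 - (1 - 1/x - Real.log x) * (2*(x-1))
      = (x-1) * ((1/x^2 - 1/x) * (x-1) - 2*(1 - 1/x - Real.log x)) := by ring
  rw [this]
  nlinarith [key, hx1]

lemma convexOn_phi : ConvexOn ℝ (Ioo (0:ℝ) 1) phi := by
  have hderiv_eq : ∀ x ∈ Ioo (0:ℝ) 1,
      deriv phi x = (1 - 1/x - Real.log x) / (x-1)^2 := fun x hx => (hasDerivAt_phi hx).deriv
  have hd2 : ∀ x ∈ Ioo (0:ℝ) 1, HasDerivAt (deriv phi)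
      (((1/x^2 - 1/x) * (x-1)^2 - (1 - 1/x - Real.log x) * (2*(x-1))) / ((x-1)^2)^2) x := by
    intro x hx
    refine (hasDerivAt_deriv_phi hx).congr_of_eventuallyEq ?_
    exact Filter.eventuallyEq_of_mem (Ioo_mem_nhds hx.1 hx.2) (fun y hy => hderiv_eq y hy)
  apply convexOn_of_deriv2_nonneg (convex_Ioo 0 1)
  · exact fun x hx => (hasDerivAt_phi hx).continuousAt.continuousWithinAt
  · rw [interior_Ioo]
    exact fun x hx => (hasDerivAt_phi hx).differentiableAt.differentiableWithinAt
  · rw [interior_Ioo]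
    exact fun x hx => (hd2 x hx).differentiableAt.differentiableWithinAt
  · rw [interior_Ioo]
    intro x hx
    have : deriv^[2] phi x = deriv (deriv phi) x := by
      simp [Function.iterate_succ, Function.iterate_one]
    rw [this, (hd2 x hx).deriv]
    exact deriv2_phi_nonneg hx

lemma phi_half : phi (1/2 : ℝ) = 2 * Real.log 2 := by
  unfold phi
  rw [one_div, Real.log_inv]
  rw [div_eq_iff (by norm_num)]
  ring

theorem stmt7 :
    (∀ α ∈ Set.Ioo (0:ℝ) 1,
        4 * Real.log 2
          ≤ (-(α * Real.log α) - (1 - α) * Real.log (1 - α)) / (α * (1 - α)))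
    ∧ (-((1/2 : ℝ) * Real.log (1/2)) - (1 - 1/2) * Real.log (1 - 1/2))
        / ((1/2) * (1 - 1/2)) = 4 * Real.log 2 := by
  constructor
  · intro α hα
    have hα0 : 0 < α := hα.1
    have hα1 : α < 1 := hα.2
    have h1α : (1 - α) ∈ Set.Ioo (0:ℝ) 1 := ⟨by linarith, by linarith⟩
    have hj := convexOn_phi.2 hα h1α (by norm_num : (0:ℝ) ≤ 1/2)
      (by norm_num : (0:ℝ) ≤ 1/2) (by norm_num)
    rw [smul_eq_mul, smul_eq_mul, smul_eq_mul, smul_eq_mul,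
      show (1/2:ℝ) * α + 1/2 * (1 - α) = 1/2 by ring, phi_half] at hj
    have heq : (-(α * Real.log α) - (1 - α) * Real.log (1 - α)) / (α * (1 - α))
        = phi α + phi (1 - α) := by
      have h1 : α ≠ 0 := hα0.ne'
      have h2 : (1 - α) ≠ 0 := by intro h; rw [sub_eq_zero] at h; exact (h ▸ hα1).false
      have h3 : α - 1 ≠ 0 := by intro h; rw [sub_eq_zero] at h; exact (h ▸ hα1).false
      unfold phi
      rw [show (1 - α) - 1 = -α by ring, div_neg, div_eq_iff (mul_ne_zero h1 h2)]
      field_simp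
      ring
    rw [heq]
    linarith
  · rw [show (1:ℝ) - 1/2 = 1/2 by norm_num, one_div, Real.log_inv]
    rw [div_eq_iff (by norm_num)]
    ring
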